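/- Let μ be a probability measure on [0,1] with density f, and for k ≥ 1 define the tilted measure μ_k with density proportional to f(p)(1−(1−p)^k). Then the mean activity of observed users ∫ p dμ_k(p) is at least the population mean activity ∫ p dμ(p), and it is nonincreasing in k. -/

import Mathlib

open MeasureTheory intervalIntegral Finset

private lemma cheb_aux (w ψ : ℝ → ℝ)
    (hw : IntervalIntegrable w volume 0 1)
    (hws : IntervalIntegrable (fun p => w p * ψ p) volume 0 1)
    (hsign : ∀ x ∈ Set.Icc (0:ℝ) 1, ∀ y ∈ Set.Icc (0:ℝ) 1,
      0 ≤ w x * w y * (x - y) * (ψ x - ψ y)) :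
    (∫ p in (0:ℝ)..1, p * w p) * (∫ p in (0:ℝ)..1, w p * ψ p)
      ≤ (∫ p in (0:ℝ)..1, w p) * (∫ p in (0:ℝ)..1, p * w p * ψ p) := by
  have hid : ContinuousOn (fun p : ℝ => p) (Set.uIcc (0:ℝ) 1) := continuous_id.continuousOn
  have hpw : IntervalIntegrable (fun p => p * w p) volume 0 1 := hw.continuousOn_mul hid
  have hpws : IntervalIntegrable (fun p => p * (w p * ψ p)) volume 0 1 :=
    hws.continuousOn_mul hid
  set A := ∫ p in (0:ℝ)..1, w p with hA
  set M := ∫ p in (0:ℝ)..1, p * w p with hM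
  set P := ∫ p in (0:ℝ)..1, w p * ψ p with hP
  set Q := ∫ p in (0:ℝ)..1, p * (w p * ψ p) with hQ
  have hQ' : (∫ p in (0:ℝ)..1, p * w p * ψ p) = Q := by
    simp only [hQ, mul_assoc]
  have inner : ∀ x : ℝ,
      (∫ y in (0:ℝ)..1, w x * w y * (x - y) * (ψ x - ψ y))
        = w x * ((x * ψ x) * A - x * P - ψ x * M + Q) := by
    intro x
    have hfun : (fun y => w x * w y * (x - y) * (ψ x - ψ y))
        = fun y => (w x * (x * ψ x)) * w y - (w x * x) * (w y * ψ y)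
            - ((w x * ψ x) * (y * w y) - w x * (y * (w y * ψ y))) := by
      funext y; ring
    rw [hfun, integral_sub ((hw.const_mul _).sub (hws.const_mul _))
        ((hpw.const_mul _).sub (hpws.const_mul _)),
      integral_sub (hw.const_mul _) (hws.const_mul _),
      integral_sub (hpw.const_mul _) (hpws.const_mul _),
      intervalIntegral.integral_const_mul, intervalIntegral.integral_const_mul,
      intervalIntegral.integral_const_mul, intervalIntegral.integral_const_mul]
    ring
  have key : 0 ≤ ∫ x in (0:ℝ)..1, w x * ((x * ψ x) * A - x * P - ψ x * M + Q) := by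
    apply intervalIntegral.integral_nonneg zero_le_one
    intro x hx
    rw [← inner x]
    exact intervalIntegral.integral_nonneg zero_le_one fun y hy => hsign x hx y hy
  have hfun2 : (fun x => w x * ((x * ψ x) * A - x * P - ψ x * M + Q))
      = fun x => (A * (x * (w x * ψ x)) - P * (x * w x))
          - (M * (w x * ψ x) - Q * w x) := by
    funext x; ring
  rw [hfun2, integral_sub ((hpws.const_mul _).sub (hpw.const_mul _))
      ((hws.const_mul _).sub (hw.const_mul _)),
    integral_sub (hpws.const_mul _) (hpw.const_mul _),
    integral_sub (hws.const_mul _) (hw.const_mul _),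
    intervalIntegral.integral_const_mul, intervalIntegral.integral_const_mul,
    intervalIntegral.integral_const_mul, intervalIntegral.integral_const_mul] at key
  rw [hQ']
  nlinarith [key]

private lemma geom_fact (q : ℝ) (n : ℕ) : 1 - q ^ n = (1 - q) * ∑ i ∈ range n, q ^ i := by
  have h := geom_sum_mul q n
  linear_combination h

private lemma core_sum (k : ℕ) {u v : ℝ} (hu0 : 0 ≤ u) (huv : u ≤ v) :
    u ^ k * ∑ i ∈ range k, v ^ i ≤ v ^ k * ∑ i ∈ range k, u ^ i := by
  have hv0 : 0 ≤ v := hu0.trans huv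
  rw [mul_sum, mul_sum]
  apply sum_le_sum
  intro i hi
  have hik : i ≤ k := (mem_range.mp hi).le
  have h1 : u ^ (k - i) ≤ v ^ (k - i) := pow_le_pow_left₀ hu0 huv _
  have hu : u ^ k = u ^ i * u ^ (k - i) := by rw [← pow_add, Nat.add_sub_cancel' hik]
  have hv : v ^ k = v ^ i * v ^ (k - i) := by rw [← pow_add, Nat.add_sub_cancel' hik]
  calc u ^ k * v ^ i = (u ^ i * v ^ i) * u ^ (k - i) := by rw [hu]; ring
    _ ≤ (u ^ i * v ^ i) * v ^ (k - i) := by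
        apply mul_le_mul_of_nonneg_left h1 (by positivity)
    _ = v ^ k * u ^ i := by rw [hv]; ring

private lemma cross_ineq (k : ℕ) {x y : ℝ} (hy : 0 < y) (hx1 : x ≤ 1) (hyx : y ≤ x) :
    (1 - (1 - x) ^ (k + 1)) * (1 - (1 - y) ^ k)
      ≤ (1 - (1 - y) ^ (k + 1)) * (1 - (1 - x) ^ k) := by
  set u := 1 - x with hu
  set v := 1 - y with hv
  have hu0 : 0 ≤ u := by simp [hu]; linarith
  have huv : u ≤ v := by simp [hu, hv]; linarith
  have hv1 : v < 1 := by simp [hv]; linarith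
  have e1 := geom_fact u k
  have e2 := geom_fact v k
  have e3 := geom_fact u (k + 1)
  have e4 := geom_fact v (k + 1)
  rw [geom_sum_succ'] at e3 e4
  set Su := ∑ i ∈ range k, u ^ i with hSu
  set Sv := ∑ i ∈ range k, v ^ i with hSv
  have core := core_sum k hu0 huv
  have h1u : 0 ≤ 1 - u := by linarith
  have h1v : 0 ≤ 1 - v := by linarith
  rw [e1, e2, e3, e4]
  nlinarith [mul_nonneg (mul_nonneg h1u h1v) (sub_nonneg.mpr core)]

private lemma gk_pos (k : ℕ) (hk : 1 ≤ k) {p : ℝ} (hp0 : 0 < p) (hp1 : p ≤ 1) :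
    0 < 1 - (1 - p) ^ k := by
  have : (1 - p) ^ k < 1 :=
    pow_lt_one₀ (by linarith) (by linarith) (by omega)
  linarith

/-- The mean activity of observed users is at least the population mean activity, and is
nonincreasing in the experiment duration `k`. -/
theorem observed_mean_activity_ge_and_antitone
    (f : ℝ → ℝ)
    (hf_nonneg : ∀ p ∈ Set.Icc (0:ℝ) 1, 0 ≤ f p)
    (hf_density : ∫ p in (0:ℝ)..1, f p = 1)
    (hf_int : IntervalIntegrable f MeasureTheory.volume 0 1)
    (hden_pos : ∀ k : ℕ, 1 ≤ k → 0 < ∫ p in (0:ℝ)..1, f p * (1 - (1 - p) ^ k)) :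
    (∀ k : ℕ, 1 ≤ k →
      (∫ p in (0:ℝ)..1, p * f p) ≤
        (∫ p in (0:ℝ)..1, p * f p * (1 - (1 - p) ^ k))
          / ∫ p in (0:ℝ)..1, f p * (1 - (1 - p) ^ k)) ∧
    (∀ k : ℕ, 1 ≤ k →
      (∫ p in (0:ℝ)..1, p * f p * (1 - (1 - p) ^ (k + 1)))
          / (∫ p in (0:ℝ)..1, f p * (1 - (1 - p) ^ (k + 1)))
        ≤ (∫ p in (0:ℝ)..1, p * f p * (1 - (1 - p) ^ k))
          / ∫ p in (0:ℝ)..1, f p * (1 - (1 - p) ^ k)) := by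
  have hIcc : Set.uIcc (0:ℝ) 1 = Set.Icc 0 1 := Set.uIcc_of_le zero_le_one
  constructor
  · -- Part 1
    intro k hk
    have hcont : Continuous (fun p : ℝ => 1 - (1 - p) ^ k) := by continuity
    have hws : IntervalIntegrable (fun p => f p * (1 - (1 - p) ^ k)) volume 0 1 :=
      hf_int.mul_continuousOn hcont.continuousOn
    have hsign : ∀ x ∈ Set.Icc (0:ℝ) 1, ∀ y ∈ Set.Icc (0:ℝ) 1,
        0 ≤ f x * f y * (x - y) * ((1 - (1 - x) ^ k) - (1 - (1 - y) ^ k)) := by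
      have half : ∀ x ∈ Set.Icc (0:ℝ) 1, ∀ y ∈ Set.Icc (0:ℝ) 1, y ≤ x →
          0 ≤ f x * f y * (x - y) * ((1 - (1 - x) ^ k) - (1 - (1 - y) ^ k)) := by
        intro x hx y hy hyx
        have hmono : (1 - x) ^ k ≤ (1 - y) ^ k :=
          pow_le_pow_left₀ (by linarith [hx.2]) (by linarith) _
        have hfx := hf_nonneg x hx
        have hfy := hf_nonneg y hy
        have h1 : 0 ≤ (1 - (1 - x) ^ k) - (1 - (1 - y) ^ k) := by linarith
        have hxy : 0 ≤ x - y := by linarith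
        exact mul_nonneg (mul_nonneg (mul_nonneg hfx hfy) hxy) h1
      intro x hx y hy
      rcases le_total y x with h | h
      · exact half x hx y hy h
      · have := half y hy x hx h
        nlinarith [this]
    have h := cheb_aux f (fun p => 1 - (1 - p) ^ k) hf_int hws hsign
    rw [hf_density, one_mul] at h
    rw [le_div_iff₀ (hden_pos k hk)]
    exact h
  · -- Part 2
    intro k hk
    have hcontk : Continuous (fun p : ℝ => 1 - (1 - p) ^ k) := by continuity
    have hcontk1 : Continuous (fun p : ℝ => 1 - (1 - p) ^ (k + 1)) := by continuity
    have hw : IntervalIntegrable (fun p => f p * (1 - (1 - p) ^ k)) volume 0 1 :=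
      hf_int.mul_continuousOn hcontk.continuousOn
    have hwk1 : IntervalIntegrable (fun p => f p * (1 - (1 - p) ^ (k + 1))) volume 0 1 :=
      hf_int.mul_continuousOn hcontk1.continuousOn
    -- pointwise identity on [0,1]
    have hpt : ∀ p ∈ Set.Icc (0:ℝ) 1,
        (f p * (1 - (1 - p) ^ k)) * (-((1 - (1 - p) ^ (k + 1)) / (1 - (1 - p) ^ k)))
          = -(f p * (1 - (1 - p) ^ (k + 1))) := by
      intro p hp
      rcases eq_or_lt_of_le hp.1 with h0 | h0
      · rw [← h0]; norm_num
      · have hne : (1 - (1 - p) ^ k) ≠ 0 := (gk_pos k hk h0 hp.2).ne'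
        field_simp
    have hws : IntervalIntegrable
        (fun p => (f p * (1 - (1 - p) ^ k)) * (-((1 - (1 - p) ^ (k + 1)) / (1 - (1 - p) ^ k))))
        volume 0 1 := by
      apply hwk1.neg.congr
      have hsub : Set.uIoc (0:ℝ) 1 ⊆ Set.Icc 0 1 := by
        rw [Set.uIoc_of_le zero_le_one]
        exact Set.Ioc_subset_Icc_self
      intro p hp
      exact (hpt p (hsub hp)).symm
    have hsign : ∀ x ∈ Set.Icc (0:ℝ) 1, ∀ y ∈ Set.Icc (0:ℝ) 1,
        0 ≤ (f x * (1 - (1 - x) ^ k)) * (f y * (1 - (1 - y) ^ k)) * (x - y) *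
          ((-((1 - (1 - x) ^ (k + 1)) / (1 - (1 - x) ^ k)))
            - (-((1 - (1 - y) ^ (k + 1)) / (1 - (1 - y) ^ k)))) := by
      have half : ∀ x ∈ Set.Icc (0:ℝ) 1, ∀ y ∈ Set.Icc (0:ℝ) 1, y ≤ x →
          0 ≤ (f x * (1 - (1 - x) ^ k)) * (f y * (1 - (1 - y) ^ k)) * (x - y) *
            ((-((1 - (1 - x) ^ (k + 1)) / (1 - (1 - x) ^ k)))
              - (-((1 - (1 - y) ^ (k + 1)) / (1 - (1 - y) ^ k)))) := by
        intro x hx y hy hyx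
        rcases eq_or_lt_of_le hy.1 with h0 | h0
        · rw [← h0]; norm_num
        · have hx0 : (0:ℝ) < x := lt_of_lt_of_le h0 hyx
          have hgx := gk_pos k hk hx0 hx.2
          have hgy := gk_pos k hk h0 hy.2
          have hr : (1 - (1 - x) ^ (k + 1)) / (1 - (1 - x) ^ k)
              ≤ (1 - (1 - y) ^ (k + 1)) / (1 - (1 - y) ^ k) :=
            (div_le_div_iff₀ hgx hgy).mpr (cross_ineq k h0 hx.2 hyx)
          have hfx := hf_nonneg x hx
          have hfy := hf_nonneg y hy
          have hψ : 0 ≤ (-((1 - (1 - x) ^ (k + 1)) / (1 - (1 - x) ^ k)))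
              - (-((1 - (1 - y) ^ (k + 1)) / (1 - (1 - y) ^ k))) := by linarith
          have hxy : 0 ≤ x - y := by linarith
          apply mul_nonneg
          apply mul_nonneg
          apply mul_nonneg (mul_nonneg hfx hgx.le) (mul_nonneg hfy hgy.le)
          exact hxy
          exact hψ
      intro x hx y hy
      rcases le_total y x with h | h
      · exact half x hx y hy h
      · have := half y hy x hx h
        nlinarith [this]
    have h : (∫ p in (0:ℝ)..1, p * (f p * (1 - (1 - p) ^ k))) *
          (∫ p in (0:ℝ)..1, (f p * (1 - (1 - p) ^ k)) *
            (-((1 - (1 - p) ^ (k + 1)) / (1 - (1 - p) ^ k))))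
        ≤ (∫ p in (0:ℝ)..1, f p * (1 - (1 - p) ^ k)) *
          (∫ p in (0:ℝ)..1, p * (f p * (1 - (1 - p) ^ k)) *
            (-((1 - (1 - p) ^ (k + 1)) / (1 - (1 - p) ^ k)))) :=
      cheb_aux (fun p => f p * (1 - (1 - p) ^ k))
        (fun p => -((1 - (1 - p) ^ (k + 1)) / (1 - (1 - p) ^ k))) hw hws hsign
    have eM : (∫ p in (0:ℝ)..1, p * (f p * (1 - (1 - p) ^ k)))
        = ∫ p in (0:ℝ)..1, p * f p * (1 - (1 - p) ^ k) := by
      simp only [mul_assoc]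
    have eP : (∫ p in (0:ℝ)..1, (f p * (1 - (1 - p) ^ k)) *
          (-((1 - (1 - p) ^ (k + 1)) / (1 - (1 - p) ^ k))))
        = -(∫ p in (0:ℝ)..1, f p * (1 - (1 - p) ^ (k + 1))) := by
      rw [← intervalIntegral.integral_neg]
      apply intervalIntegral.integral_congr
      intro p hp
      rw [hIcc] at hp
      exact hpt p hp
    have eQ : (∫ p in (0:ℝ)..1, p * (f p * (1 - (1 - p) ^ k)) *
          (-((1 - (1 - p) ^ (k + 1)) / (1 - (1 - p) ^ k))))
        = -(∫ p in (0:ℝ)..1, p * f p * (1 - (1 - p) ^ (k + 1))) := by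
      rw [← intervalIntegral.integral_neg]
      apply intervalIntegral.integral_congr
      intro p hp
      rw [hIcc] at hp
      have := hpt p hp
      calc p * (f p * (1 - (1 - p) ^ k)) * (-((1 - (1 - p) ^ (k + 1)) / (1 - (1 - p) ^ k)))
          = p * ((f p * (1 - (1 - p) ^ k)) * (-((1 - (1 - p) ^ (k + 1)) / (1 - (1 - p) ^ k)))) := by
            ring
        _ = p * (-(f p * (1 - (1 - p) ^ (k + 1)))) := by rw [this]
        _ = -(p * f p * (1 - (1 - p) ^ (k + 1))) := by ring
    rw [eM, eP, eQ] at h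
    rw [div_le_div_iff₀ (hden_pos (k + 1) (by omega)) (hden_pos k hk)]
    nlinarith [h]
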